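/- arXiv:2507.11090 — 3 statements merged into one kernel-verified Lean document; each statement's English description precedes it below -/
import Mathlib

section
/- Anchoring a single edge x in a graph G increases the trussness of any other edge by at most 1; that is, for every edge e, t^{x}(e) - t(e) ≤ 1, where t^{x}(e) denotes trussness computed when x is treated as having infinite support (x is never removed during truss decomposition). -/
variable {V : Type*}

/-- Support of an (unordered) edge in graph `H`: number of common neighbors. -/
noncomputable def esupp [Fintype V] (H : SimpleGraph V) : Sym2 V → ℕ :=
  Sym2.lift ⟨fun u v => Nat.card {w : V // H.Adj u w ∧ H.Adj v w},
    fun _ _ => Nat.card_congr (Equiv.subtypeEquivRight fun _ => and_comm)⟩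

/-- `H` is a subgraph of `G` in which every edge has support at least `k-2`. -/
def IsTrussSub [Fintype V] (G H : SimpleGraph V) (k : ℕ) : Prop :=
  H ≤ G ∧ ∀ e ∈ H.edgeSet, k - 2 ≤ esupp H e

/-- Trussness of an edge: the largest `k` such that some subgraph witnessing
the `k`-truss support condition contains it. -/
noncomputable def etruss [Fintype V] (G : SimpleGraph V) (e : Sym2 V) : ℕ :=
  sSup {k | ∃ H, IsTrussSub G H k ∧ e ∈ H.edgeSet}

/-- The `k`-truss of `G`: the maximal subgraph in which every edge has support `≥ k-2`. -/
noncomputable def trussG [Fintype V] (G : SimpleGraph V) (k : ℕ) : SimpleGraph V :=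
  sSup {H | IsTrussSub G H k}

/-- Anchored truss-subgraph: edges in the anchor set `A` are exempt from the
support constraint. -/
def IsATrussSub [Fintype V] (G H : SimpleGraph V) (A : Set (Sym2 V)) (k : ℕ) : Prop :=
  H ≤ G ∧ ∀ e ∈ H.edgeSet, e ∈ A ∨ k - 2 ≤ esupp H e

/-- Anchored trussness `t^A(e)`. -/
noncomputable def atruss [Fintype V] (G : SimpleGraph V) (A : Set (Sym2 V)) (e : Sym2 V) : ℕ :=
  sSup {k | ∃ H, IsATrussSub G H A k ∧ e ∈ H.edgeSet}

/-- The anchored `k`-truss of `G` with anchor set `A`. -/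
noncomputable def atrussGraph [Fintype V] (G : SimpleGraph V) (A : Set (Sym2 V)) (k : ℕ) :
    SimpleGraph V :=
  sSup {H | IsATrussSub G H A k}

/-- Trussness gain: total increment of trussness over all non-anchor edges. -/
noncomputable def TG [Fintype V] (G : SimpleGraph V) (A : Set (Sym2 V)) : ℕ :=
  ∑ e ∈ (G.edgeSet \ A).toFinite.toFinset, (atruss G A e - etruss G e)

/-- `a b c` form a triangle in `G`. -/
def IsTri (G : SimpleGraph V) (a b c : V) : Prop := G.Adj a b ∧ G.Adj b c ∧ G.Adj a c

/-- The three edges of the triangle on `a b c`. -/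
def triE (a b c : V) : Set (Sym2 V) := {s(a, b), s(b, c), s(a, c)}

/-- Two edges lie in a common triangle of `G`. -/
def ShareTri (G : SimpleGraph V) (e f : Sym2 V) : Prop :=
  ∃ a b c, IsTri G a b c ∧ e ∈ triE a b c ∧ f ∈ triE a b c

/-- Triangle connectivity: chain of triangles, consecutive ones sharing an edge. -/
def TriConn (G : SimpleGraph V) : Sym2 V → Sym2 V → Prop := Relation.TransGen (ShareTri G)

/-- A `k`-truss component: a truss-subgraph whose edges are pairwise
triangle-connected within it, maximal with these properties. -/
def IsTrussComponent [Fintype V] (G S : SimpleGraph V) (k : ℕ) : Prop :=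
  IsTrussSub G S k ∧
  (∀ e ∈ S.edgeSet, ∀ f ∈ S.edgeSet, e = f ∨ TriConn S e f) ∧
  ∀ S', IsTrussSub G S' k →
    (∀ e ∈ S'.edgeSet, ∀ f ∈ S'.edgeSet, e = f ∨ TriConn S' e f) → S ≤ S' → S' = S

lemma esupp_le_card [Fintype V] (H : SimpleGraph V) (e : Sym2 V) :
    esupp H e ≤ Fintype.card V := by
  induction e using Sym2.ind with
  | _ u v =>
    simp only [esupp, Sym2.lift_mk]
    calc Nat.card {w // H.Adj u w ∧ H.Adj v w} ≤ Nat.card V :=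
          Nat.card_le_card_of_injective _ Subtype.val_injective
      _ = Fintype.card V := Nat.card_eq_fintype_card

lemma esupp_eq_ncard [Fintype V] (H : SimpleGraph V) (u v : V) :
    esupp H s(u, v) = {w | H.Adj u w ∧ H.Adj v w}.ncard := by
  simp only [esupp, Sym2.lift_mk]
  exact Nat.card_coe_set_eq _

lemma supp_del [Fintype V] (H : SimpleGraph V) (x : Sym2 V) (a b : V)
    (hab : H.Adj a b) (hne : s(a, b) ≠ x) :
    esupp H s(a, b) ≤ esupp (H.deleteEdges {x}) s(a, b) + 1 := by
  rw [esupp_eq_ncard, esupp_eq_ncard]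
  set S : Set V := {w | H.Adj a w ∧ H.Adj b w} with hS
  set S' : Set V := {w | (H.deleteEdges {x}).Adj a w ∧ (H.deleteEdges {x}).Adj b w} with hS'
  have hsub : S ⊆ S' ∪ (S \ S') := fun w hw => by
    by_cases h : w ∈ S'
    · exact Or.inl h
    · exact Or.inr ⟨hw, h⟩
  have hss : (S \ S').Subsingleton := by
    intro w1 hw1 w2 hw2
    have key : ∀ w ∈ S \ S', s(a, w) = x ∨ s(b, w) = x := by
      rintro w ⟨⟨hwa, hwb⟩, hw'⟩
      by_contra hc
      push_neg at hc
      exact hw' ⟨SimpleGraph.deleteEdges_adj.2 ⟨hwa, by simpa using hc.1⟩,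
        SimpleGraph.deleteEdges_adj.2 ⟨hwb, by simpa using hc.2⟩⟩
    have h1 := key w1 hw1
    have h2 := key w2 hw2
    have hab' : a ≠ b := hab.ne
    rcases h1 with h1 | h1 <;> rcases h2 with h2 | h2
    · have := h1.trans h2.symm
      rw [Sym2.eq_iff] at this
      rcases this with ⟨_, h⟩ | ⟨h, h'⟩
      · exact h
      · exact h'.trans h
    · have := h1.trans h2.symm
      rw [Sym2.eq_iff] at this
      rcases this with ⟨h, _⟩ | ⟨h, h'⟩
      · exact absurd h hab'
      · exact absurd (by rw [← h']; exact h1 : s(a,b) = x) hne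
    · have := h1.trans h2.symm
      rw [Sym2.eq_iff] at this
      rcases this with ⟨h, _⟩ | ⟨h, h'⟩
      · exact absurd h hab'.symm
      · exact absurd (by rw [h]; exact h2 : s(a,b) = x) hne
    · have := h1.trans h2.symm
      rw [Sym2.eq_iff] at this
      rcases this with ⟨_, h⟩ | ⟨h, h'⟩
      · exact h
      · exact h'.trans h
  have hd : (S \ S').ncard ≤ 1 := by
    rcases hss.eq_empty_or_singleton with h | ⟨w, h⟩
    · simp [h]
    · simp [h]
  calc S.ncard ≤ (S' ∪ (S \ S')).ncard :=
        Set.ncard_le_ncard hsub (Set.toFinite _)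
    _ ≤ S'.ncard + (S \ S').ncard := Set.ncard_union_le _ _
    _ ≤ S'.ncard + 1 := by omega

theorem stmt4 [Fintype V] (G : SimpleGraph V) (x e : Sym2 V)
    (hx : x ∈ G.edgeSet) (he : e ∈ G.edgeSet) (hne : e ≠ x) :
    atruss G {x} e ≤ etruss G e + 1 := by
  apply csSup_le'
  rintro k ⟨H, ⟨hHG, hsupp⟩, heH⟩
  rw [← Nat.sub_le_iff_le_add]
  apply le_csSup
  · refine ⟨Fintype.card V + 2, ?_⟩
    rintro m ⟨H', ⟨_, hs⟩, heH'⟩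
    have h1 := hs e heH'
    have h2 := esupp_le_card H' e
    omega
  · refine ⟨H.deleteEdges {x}, ⟨?_, ?_⟩, ?_⟩
    · exact (SimpleGraph.deleteEdges_le _).trans hHG
    · intro f hf
      rw [SimpleGraph.edgeSet_deleteEdges] at hf
      obtain ⟨hfH, hfx⟩ := hf
      have hfx' : f ≠ x := by simpa using hfx
      have h1 : k - 2 ≤ esupp H f := (hsupp f hfH).resolve_left hfx'
      induction f using Sym2.ind with
      | _ a b =>
        have h2 := supp_del H x a b (H.mem_edgeSet.1 hfH) hfx'
        omega
    · rw [SimpleGraph.edgeSet_deleteEdges]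
      exact ⟨heH, by simpa using hne⟩
end

section
/- The trussness gain function TG(·,G) is not submodular: there exists a finite simple graph G and disjoint singleton anchor sets A and B such that TG(A,G) + TG(B,G) < TG(A∪B,G) + TG(A∩B,G). -/
variable {V : Type*}

-- ===== auxiliary development =====

/-- adjacency of the counterexample graph -/
def g6b : Fin 6 → Fin 6 → Bool := fun u v =>
  ([(0,1),(0,2),(0,3),(0,4),(0,5),(1,3),(1,4),(1,5),(2,3),(2,4),(2,5),(3,4)] :
    List (ℕ × ℕ)).any fun p =>
      (u.val == p.1 && v.val == p.2) || (u.val == p.2 && v.val == p.1)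

/-- the counterexample graph -/
lemma g6b_symm : ∀ u v : Fin 6, g6b u v = true → g6b v u = true := by decide
lemma g6b_irrefl : ∀ u : Fin 6, ¬ g6b u u = true := by decide

def G6 : SimpleGraph (Fin 6) where
  Adj u v := g6b u v = true
  symm := ⟨fun u v h => g6b_symm u v h⟩
  loopless := ⟨fun u h => g6b_irrefl u h⟩

instance : DecidableRel G6.Adj := fun u v => inferInstanceAs (Decidable (g6b u v = true))

/-- adjacency of the witness 4-truss: K₅ minus the edge 12 -/
def k6b : Fin 6 → Fin 6 → Bool := fun u v =>
  ([(0,1),(0,2),(0,3),(0,4),(1,3),(1,4),(2,3),(2,4),(3,4)] :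
    List (ℕ × ℕ)).any fun p =>
      (u.val == p.1 && v.val == p.2) || (u.val == p.2 && v.val == p.1)

lemma k6b_symm : ∀ u v : Fin 6, k6b u v = true → k6b v u = true := by decide
lemma k6b_irrefl : ∀ u : Fin 6, ¬ k6b u u = true := by decide

def K6 : SimpleGraph (Fin 6) where
  Adj u v := k6b u v = true
  symm := ⟨fun u v h => k6b_symm u v h⟩
  loopless := ⟨fun u h => k6b_irrefl u h⟩

instance : DecidableRel K6.Adj := fun u v => inferInstanceAs (Decidable (k6b u v = true))

lemma esupp_ncard [Fintype V] (H : SimpleGraph V) (u v : V) :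
    esupp H s(u, v) = Set.ncard {w : V | H.Adj u w ∧ H.Adj v w} := rfl

lemma esupp_eval (H : SimpleGraph (Fin 6)) [DecidableRel H.Adj] (u v : Fin 6) :
    esupp H s(u, v) = Fintype.card {w : Fin 6 // H.Adj u w ∧ H.Adj v w} := by
  rw [show esupp H s(u, v) = Nat.card {w : Fin 6 // H.Adj u w ∧ H.Adj v w} from rfl,
    Nat.card_eq_fintype_card]

lemma esupp_mono {H G : SimpleGraph (Fin 6)} (hle : H ≤ G) (e : Sym2 (Fin 6)) :
    esupp H e ≤ esupp G e := by
  induction e using Sym2.ind with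
  | _ u v =>
    rw [esupp_ncard, esupp_ncard]
    exact Set.ncard_le_ncard (fun w hw => ⟨hle hw.1, hle hw.2⟩) (Set.toFinite _)

lemma esupp_le_six (H : SimpleGraph (Fin 6)) (e : Sym2 (Fin 6)) : esupp H e ≤ 6 := by
  induction e using Sym2.ind with
  | _ u v =>
    rw [esupp_ncard]
    refine le_trans (Set.ncard_le_ncard (Set.subset_univ _) (Set.toFinite _)) ?_
    rw [Set.ncard_univ]
    simp

lemma pair2 {P : Fin 6 → Prop} {c1 c2 : Fin 6} (hs : ∀ w, P w → w = c1 ∨ w = c2)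
    (h : 2 ≤ Set.ncard {w | P w}) : P c1 ∧ P c2 := by
  have hsub : {w | P w} ⊆ {c1, c2} := by
    intro w hw
    rcases hs w hw with rfl | rfl <;> simp
  have hcard : ({c1, c2} : Set (Fin 6)).ncard ≤ {w | P w}.ncard :=
    le_trans (le_trans (Set.ncard_insert_le _ _) (by simp [Set.ncard_singleton])) h
  have heq : {w | P w} = {c1, c2} := Set.eq_of_subset_of_ncard_le hsub hcard
  constructor
  · have : c1 ∈ {w | P w} := heq ▸ (by simp : c1 ∈ ({c1, c2} : Set (Fin 6)))
    exact this
  · have : c2 ∈ {w | P w} := heq ▸ (by simp : c2 ∈ ({c1, c2} : Set (Fin 6)))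
    exact this

lemma triple3 {P : Fin 6 → Prop} {c1 c2 c3 : Fin 6}
    (hs : ∀ w, P w → w = c1 ∨ w = c2 ∨ w = c3)
    (h : 3 ≤ Set.ncard {w | P w}) : P c1 ∧ P c2 ∧ P c3 := by
  have hsub : {w | P w} ⊆ {c1, c2, c3} := by
    intro w hw
    rcases hs w hw with rfl | rfl | rfl <;> simp
  have hcard : ({c1, c2, c3} : Set (Fin 6)).ncard ≤ {w | P w}.ncard := by
    refine le_trans (le_trans (Set.ncard_insert_le _ _) ?_) h
    have := Set.ncard_insert_le c2 ({c3} : Set (Fin 6))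
    simp [Set.ncard_singleton] at this ⊢
    omega
  have heq : {w | P w} = {c1, c2, c3} := Set.eq_of_subset_of_ncard_le hsub hcard
  refine ⟨?_, ?_, ?_⟩
  · exact (heq ▸ (by simp : c1 ∈ ({c1, c2, c3} : Set (Fin 6))) : c1 ∈ {w | P w})
  · exact (heq ▸ (by simp : c2 ∈ ({c1, c2, c3} : Set (Fin 6))) : c2 ∈ {w | P w})
  · exact (heq ▸ (by simp : c3 ∈ ({c1, c2, c3} : Set (Fin 6))) : c3 ∈ {w | P w})

lemma sym_kill {H : SimpleGraph (Fin 6)} {x y : Fin 6} (k : ¬ H.Adj x y) {u v : Fin 6}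
    (h : s(u, v) = s(x, y)) : ¬ H.Adj u v := by
  rcases Sym2.eq_iff.mp h with ⟨rfl, rfl⟩ | ⟨rfl, rfl⟩
  · exact k
  · exact fun hadj => k hadj.symm

/-- With anchors among {15,25}, any subgraph whose non-anchor edges all have
support ≥ 3 has only edges among {15,25}. -/
lemma no5 (H : SimpleGraph (Fin 6)) (hle : H ≤ G6) (A : Set (Sym2 (Fin 6)))
    (hA : A ⊆ {s(1, 5), s(2, 5)})
    (hp : ∀ e ∈ H.edgeSet, e ∈ A ∨ 3 ≤ esupp H e) :
    ∀ u v : Fin 6, H.Adj u v → s(u, v) = s((1 : Fin 6), 5) ∨ s(u, v) = s((2 : Fin 6), 5) := by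
  have key : ∀ u v : Fin 6, H.Adj u v →
      s(u, v) ∉ ({s(1, 5), s(2, 5)} : Set (Sym2 (Fin 6))) → 3 ≤ esupp H s(u, v) := by
    intro u v h hn
    rcases hp _ (H.mem_edgeSet.mpr h) with hA' | h3
    · exact absurd (hA hA') hn
    · exact h3
  have notMem : ∀ {x : Sym2 (Fin 6)}, x ≠ s(1, 5) → x ≠ s(2, 5) →
      x ∉ ({s(1, 5), s(2, 5)} : Set (Sym2 (Fin 6))) := by
    intro x h1 h2 h
    rcases h with h | h
    · exact h1 h
    · exact h2 h
  have kill : ∀ u v : Fin 6, s(u, v) ∉ ({s(1, 5), s(2, 5)} : Set (Sym2 (Fin 6))) →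
      esupp G6 s(u, v) ≤ 2 → ¬ H.Adj u v := by
    intro u v hn hs h
    have h1 := key u v h hn
    have h2 := esupp_mono hle s(u, v)
    omega
  have k05 : ¬ H.Adj 0 5 := kill 0 5 (notMem (by decide) (by decide)) (by rw [esupp_eval]; decide)
  have k13 : ¬ H.Adj 1 3 := kill 1 3 (notMem (by decide) (by decide)) (by rw [esupp_eval]; decide)
  have k14 : ¬ H.Adj 1 4 := kill 1 4 (notMem (by decide) (by decide)) (by rw [esupp_eval]; decide)
  have k23 : ¬ H.Adj 2 3 := kill 2 3 (notMem (by decide) (by decide)) (by rw [esupp_eval]; decide)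
  have k24 : ¬ H.Adj 2 4 := kill 2 4 (notMem (by decide) (by decide)) (by rw [esupp_eval]; decide)
  have k03 : ¬ H.Adj 0 3 := by
    intro h
    have h3 := key 0 3 h (notMem (by decide) (by decide))
    rw [esupp_ncard] at h3
    have hcl : ∀ w, (H.Adj 0 w ∧ H.Adj 3 w) → w = 1 ∨ w = 2 ∨ w = 4 := fun w hw =>
      (by decide : ∀ w : Fin 6, G6.Adj 0 w ∧ G6.Adj 3 w → w = 1 ∨ w = 2 ∨ w = 4)
        w ⟨hle hw.1, hle hw.2⟩
    obtain ⟨-, h2, -⟩ := triple3 hcl h3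
    exact k23 h2.2.symm
  have k04 : ¬ H.Adj 0 4 := by
    intro h
    have h3 := key 0 4 h (notMem (by decide) (by decide))
    rw [esupp_ncard] at h3
    have hcl : ∀ w, (H.Adj 0 w ∧ H.Adj 4 w) → w = 1 ∨ w = 2 ∨ w = 3 := fun w hw =>
      (by decide : ∀ w : Fin 6, G6.Adj 0 w ∧ G6.Adj 4 w → w = 1 ∨ w = 2 ∨ w = 3)
        w ⟨hle hw.1, hle hw.2⟩
    obtain ⟨-, h2, -⟩ := triple3 hcl h3
    exact k24 h2.2.symm
  have k34 : ¬ H.Adj 3 4 := by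
    intro h
    have h3 := key 3 4 h (notMem (by decide) (by decide))
    rw [esupp_ncard] at h3
    have hcl : ∀ w, (H.Adj 3 w ∧ H.Adj 4 w) → w = 0 ∨ w = 1 ∨ w = 2 := fun w hw =>
      (by decide : ∀ w : Fin 6, G6.Adj 3 w ∧ G6.Adj 4 w → w = 0 ∨ w = 1 ∨ w = 2)
        w ⟨hle hw.1, hle hw.2⟩
    obtain ⟨-, -, h2⟩ := triple3 hcl h3
    exact k23 h2.1.symm
  have k01 : ¬ H.Adj 0 1 := by
    intro h
    have h3 := key 0 1 h (notMem (by decide) (by decide))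
    rw [esupp_ncard] at h3
    have hcl : ∀ w, (H.Adj 0 w ∧ H.Adj 1 w) → w = 3 ∨ w = 4 ∨ w = 5 := fun w hw =>
      (by decide : ∀ w : Fin 6, G6.Adj 0 w ∧ G6.Adj 1 w → w = 3 ∨ w = 4 ∨ w = 5)
        w ⟨hle hw.1, hle hw.2⟩
    obtain ⟨h2, -, -⟩ := triple3 hcl h3
    exact k13 h2.2
  have k02 : ¬ H.Adj 0 2 := by
    intro h
    have h3 := key 0 2 h (notMem (by decide) (by decide))
    rw [esupp_ncard] at h3
    have hcl : ∀ w, (H.Adj 0 w ∧ H.Adj 2 w) → w = 3 ∨ w = 4 ∨ w = 5 := fun w hw =>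
      (by decide : ∀ w : Fin 6, G6.Adj 0 w ∧ G6.Adj 2 w → w = 3 ∨ w = 4 ∨ w = 5)
        w ⟨hle hw.1, hle hw.2⟩
    obtain ⟨h2, -, -⟩ := triple3 hcl h3
    exact k23 h2.2
  intro u v h
  rcases (by decide : ∀ u v : Fin 6, G6.Adj u v →
      s(u, v) = s((0 : Fin 6), 1) ∨ s(u, v) = s((0 : Fin 6), 2) ∨
      s(u, v) = s((0 : Fin 6), 3) ∨ s(u, v) = s((0 : Fin 6), 4) ∨
      s(u, v) = s((0 : Fin 6), 5) ∨ s(u, v) = s((1 : Fin 6), 3) ∨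
      s(u, v) = s((1 : Fin 6), 4) ∨ s(u, v) = s((2 : Fin 6), 3) ∨
      s(u, v) = s((2 : Fin 6), 4) ∨ s(u, v) = s((3 : Fin 6), 4) ∨
      s(u, v) = s((1 : Fin 6), 5) ∨ s(u, v) = s((2 : Fin 6), 5)) u v (hle h) with
    hc | hc | hc | hc | hc | hc | hc | hc | hc | hc | hc | hc
  · exact absurd h (sym_kill k01 hc)
  · exact absurd h (sym_kill k02 hc)
  · exact absurd h (sym_kill k03 hc)
  · exact absurd h (sym_kill k04 hc)
  · exact absurd h (sym_kill k05 hc)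
  · exact absurd h (sym_kill k13 hc)
  · exact absurd h (sym_kill k14 hc)
  · exact absurd h (sym_kill k23 hc)
  · exact absurd h (sym_kill k24 hc)
  · exact absurd h (sym_kill k34 hc)
  · exact Or.inl hc
  · exact Or.inr hc

/-- With anchor set inside {15}, support-≥2 subgraphs avoid edges 05 and 25. -/
lemma no4a (H : SimpleGraph (Fin 6)) (hle : H ≤ G6) (A : Set (Sym2 (Fin 6)))
    (hA : A ⊆ {s(1, 5)})
    (hp : ∀ e ∈ H.edgeSet, e ∈ A ∨ 2 ≤ esupp H e) :
    ¬ H.Adj 0 5 ∧ ¬ H.Adj 2 5 := by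
  have key : ∀ u v : Fin 6, H.Adj u v → s(u, v) ≠ s((1 : Fin 6), 5) →
      2 ≤ esupp H s(u, v) := by
    intro u v h hn
    rcases hp _ (H.mem_edgeSet.mpr h) with hA' | h2
    · exact absurd (hA hA') hn
    · exact h2
  have k25 : ¬ H.Adj 2 5 := by
    intro h
    have h1 := key 2 5 h (by decide)
    have h2 := esupp_mono hle s((2 : Fin 6), 5)
    have h3 : esupp G6 s((2 : Fin 6), 5) ≤ 1 := by rw [esupp_eval]; decide
    omega
  refine ⟨?_, k25⟩
  intro h
  have h2 := key 0 5 h (by decide)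
  rw [esupp_ncard] at h2
  have hcl : ∀ w, (H.Adj 0 w ∧ H.Adj 5 w) → w = 1 ∨ w = 2 := fun w hw =>
    (by decide : ∀ w : Fin 6, G6.Adj 0 w ∧ G6.Adj 5 w → w = 1 ∨ w = 2) w ⟨hle hw.1, hle hw.2⟩
  obtain ⟨-, hP2⟩ := pair2 hcl h2
  exact k25 hP2.2.symm

/-- With anchor set inside {25}, support-≥2 subgraphs avoid edges 05 and 15. -/
lemma no4b (H : SimpleGraph (Fin 6)) (hle : H ≤ G6) (A : Set (Sym2 (Fin 6)))
    (hA : A ⊆ {s(2, 5)})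
    (hp : ∀ e ∈ H.edgeSet, e ∈ A ∨ 2 ≤ esupp H e) :
    ¬ H.Adj 0 5 ∧ ¬ H.Adj 1 5 := by
  have key : ∀ u v : Fin 6, H.Adj u v → s(u, v) ≠ s((2 : Fin 6), 5) →
      2 ≤ esupp H s(u, v) := by
    intro u v h hn
    rcases hp _ (H.mem_edgeSet.mpr h) with hA' | h2
    · exact absurd (hA hA') hn
    · exact h2
  have k15 : ¬ H.Adj 1 5 := by
    intro h
    have h1 := key 1 5 h (by decide)
    have h2 := esupp_mono hle s((1 : Fin 6), 5)
    have h3 : esupp G6 s((1 : Fin 6), 5) ≤ 1 := by rw [esupp_eval]; decide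
    omega
  refine ⟨?_, k15⟩
  intro h
  have h2 := key 0 5 h (by decide)
  rw [esupp_ncard] at h2
  have hcl : ∀ w, (H.Adj 0 w ∧ H.Adj 5 w) → w = 1 ∨ w = 2 := fun w hw =>
    (by decide : ∀ w : Fin 6, G6.Adj 0 w ∧ G6.Adj 5 w → w = 1 ∨ w = 2) w ⟨hle hw.1, hle hw.2⟩
  obtain ⟨hP1, -⟩ := pair2 hcl h2
  exact k15 hP1.2.symm

lemma bdd_atruss (A : Set (Sym2 (Fin 6))) (e : Sym2 (Fin 6)) (he : e ∉ A) :
    BddAbove {k | ∃ H, IsATrussSub G6 H A k ∧ e ∈ H.edgeSet} := by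
  refine ⟨8, fun k hk => ?_⟩
  obtain ⟨H, ⟨hle, hp⟩, heH⟩ := hk
  rcases hp e heH with h | h
  · exact absurd h he
  · have := esupp_le_six H e
    omega

lemma bdd_etruss (e : Sym2 (Fin 6)) :
    BddAbove {k | ∃ H, IsTrussSub G6 H k ∧ e ∈ H.edgeSet} := by
  refine ⟨8, fun k hk => ?_⟩
  obtain ⟨H, ⟨hle, hp⟩, heH⟩ := hk
  have h := hp e heH
  have := esupp_le_six H e
  omega

lemma etruss_ge3 (e : Sym2 (Fin 6)) (he : e ∈ G6.edgeSet) : 3 ≤ etruss G6 e := by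
  apply le_csSup (bdd_etruss e)
  refine ⟨G6, ⟨le_rfl, ?_⟩, he⟩
  intro f hf
  induction f using Sym2.ind with
  | _ u v =>
    rw [SimpleGraph.mem_edgeSet] at hf
    rw [esupp_eval]
    exact (by decide : ∀ u v : Fin 6, G6.Adj u v →
      3 - 2 ≤ Fintype.card {w : Fin 6 // G6.Adj u w ∧ G6.Adj v w}) u v hf

lemma K6_le_G6 : K6 ≤ G6 := fun u v h =>
  (by decide : ∀ u v : Fin 6, K6.Adj u v → G6.Adj u v) u v h

lemma etruss_ge4 (e : Sym2 (Fin 6)) (he : e ∈ K6.edgeSet) : 4 ≤ etruss G6 e := by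
  apply le_csSup (bdd_etruss e)
  refine ⟨K6, ⟨K6_le_G6, ?_⟩, he⟩
  intro f hf
  induction f using Sym2.ind with
  | _ u v =>
    rw [SimpleGraph.mem_edgeSet] at hf
    rw [esupp_eval]
    exact (by decide : ∀ u v : Fin 6, K6.Adj u v →
      4 - 2 ≤ Fintype.card {w : Fin 6 // K6.Adj u w ∧ K6.Adj v w}) u v hf

lemma atruss_le4K (A : Set (Sym2 (Fin 6))) (hA : A ⊆ {s(1, 5), s(2, 5)})
    (e : Sym2 (Fin 6)) (he : e ∈ K6.edgeSet) : atruss G6 A e ≤ 4 := by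
  apply csSup_le'
  rintro k ⟨H, ⟨hle, hp⟩, heH⟩
  by_contra hk
  push_neg at hk
  have hp3 : ∀ f ∈ H.edgeSet, f ∈ A ∨ 3 ≤ esupp H f := fun f hf =>
    (hp f hf).imp_right (fun h => le_trans (by omega) h)
  induction e using Sym2.ind with
  | _ u v =>
    rw [SimpleGraph.mem_edgeSet] at he heH
    rcases no5 H hle A hA hp3 u v heH with h | h
    · exact (by decide : ∀ u v : Fin 6, K6.Adj u v → s(u, v) ≠ s((1 : Fin 6), 5)) u v he h
    · exact (by decide : ∀ u v : Fin 6, K6.Adj u v → s(u, v) ≠ s((2 : Fin 6), 5)) u v he h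

lemma atruss_le3a (e : Sym2 (Fin 6)) (hee : e = s((0 : Fin 6), 5) ∨ e = s((2 : Fin 6), 5)) :
    atruss G6 {s((1 : Fin 6), 5)} e ≤ 3 := by
  apply csSup_le'
  rintro k ⟨H, ⟨hle, hp⟩, heH⟩
  by_contra hk
  push_neg at hk
  have hp2 : ∀ f ∈ H.edgeSet, f ∈ ({s((1 : Fin 6), 5)} : Set (Sym2 (Fin 6))) ∨ 2 ≤ esupp H f :=
    fun f hf => (hp f hf).imp_right (fun h => le_trans (by omega) h)
  have h45 := no4a H hle _ subset_rfl hp2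
  rcases hee with rfl | rfl
  · exact h45.1 (H.mem_edgeSet.mp heH)
  · exact h45.2 (H.mem_edgeSet.mp heH)

lemma atruss_le3b (e : Sym2 (Fin 6)) (hee : e = s((0 : Fin 6), 5) ∨ e = s((1 : Fin 6), 5)) :
    atruss G6 {s((2 : Fin 6), 5)} e ≤ 3 := by
  apply csSup_le'
  rintro k ⟨H, ⟨hle, hp⟩, heH⟩
  by_contra hk
  push_neg at hk
  have hp2 : ∀ f ∈ H.edgeSet, f ∈ ({s((2 : Fin 6), 5)} : Set (Sym2 (Fin 6))) ∨ 2 ≤ esupp H f :=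
    fun f hf => (hp f hf).imp_right (fun h => le_trans (by omega) h)
  have h45 := no4b H hle _ subset_rfl hp2
  rcases hee with rfl | rfl
  · exact h45.1 (H.mem_edgeSet.mp heH)
  · exact h45.2 (H.mem_edgeSet.mp heH)

lemma etruss_05_le3 : etruss G6 s((0 : Fin 6), 5) ≤ 3 := by
  apply csSup_le'
  rintro k ⟨H, ⟨hle, hp⟩, heH⟩
  by_contra hk
  push_neg at hk
  have hp2 : ∀ f ∈ H.edgeSet, f ∈ (∅ : Set (Sym2 (Fin 6))) ∨ 2 ≤ esupp H f :=
    fun f hf => Or.inr (le_trans (by omega) (hp f hf))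
  exact (no4a H hle ∅ (Set.empty_subset _) hp2).1 (H.mem_edgeSet.mp heH)

lemma hnotmem5 : s((0 : Fin 6), 5) ∉
    ({s((1 : Fin 6), 5)} ∪ {s((2 : Fin 6), 5)} : Set (Sym2 (Fin 6))) := by
  intro h
  rcases h with h | h
  · exact (by decide : s((0 : Fin 6), 5) ≠ s((1 : Fin 6), 5)) (Set.mem_singleton_iff.mp h)
  · exact (by decide : s((0 : Fin 6), 5) ≠ s((2 : Fin 6), 5)) (Set.mem_singleton_iff.mp h)

lemma atruss_ab_ge4 :
    4 ≤ atruss G6 ({s((1 : Fin 6), 5)} ∪ {s((2 : Fin 6), 5)}) s((0 : Fin 6), 5) := by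
  apply le_csSup (bdd_atruss _ _ hnotmem5)
  refine ⟨G6, ⟨le_rfl, ?_⟩, (G6.mem_edgeSet).mpr (by decide)⟩
  intro f hf
  induction f using Sym2.ind with
  | _ u v =>
    rw [SimpleGraph.mem_edgeSet] at hf
    rcases (by decide : ∀ u v : Fin 6, G6.Adj u v →
        (s(u, v) = s((1 : Fin 6), 5) ∨ s(u, v) = s((2 : Fin 6), 5) ∨
          2 ≤ Fintype.card {w : Fin 6 // G6.Adj u w ∧ G6.Adj v w})) u v hf with h | h | h
    · exact Or.inl (Set.mem_union_left _ (Set.mem_singleton_iff.mpr h))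
    · exact Or.inl (Set.mem_union_right _ (Set.mem_singleton_iff.mpr h))
    · refine Or.inr ?_
      rw [esupp_eval]
      exact h

lemma TG_a : TG G6 {s((1 : Fin 6), 5)} = 0 := by
  unfold TG
  apply Finset.sum_eq_zero
  intro e he
  rw [Set.Finite.mem_toFinset] at he
  obtain ⟨heG, hne⟩ := he
  have hne' : e ≠ s((1 : Fin 6), 5) := fun h => hne (Set.mem_singleton_iff.mpr h)
  apply Nat.sub_eq_zero_of_le
  have hsub : ({s((1 : Fin 6), 5)} : Set (Sym2 (Fin 6))) ⊆ {s(1, 5), s(2, 5)} :=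
    fun x hx => Set.mem_insert_iff.mpr (Or.inl (Set.mem_singleton_iff.mp hx))
  induction e using Sym2.ind with
  | _ u v =>
    rw [SimpleGraph.mem_edgeSet] at heG
    rcases (by decide : ∀ u v : Fin 6, G6.Adj u v →
        (K6.Adj u v ∨ s(u, v) = s((0 : Fin 6), 5) ∨ s(u, v) = s((1 : Fin 6), 5) ∨
          s(u, v) = s((2 : Fin 6), 5))) u v heG with h | h | h | h
    · exact le_trans (atruss_le4K _ hsub _ (K6.mem_edgeSet.mpr h))
        (etruss_ge4 _ (K6.mem_edgeSet.mpr h))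
    · rw [h]
      exact le_trans (atruss_le3a _ (Or.inl rfl))
        (etruss_ge3 _ (h ▸ G6.mem_edgeSet.mpr heG))
    · exact absurd h hne'
    · rw [h]
      exact le_trans (atruss_le3a _ (Or.inr rfl))
        (etruss_ge3 _ (h ▸ G6.mem_edgeSet.mpr heG))

lemma TG_b : TG G6 {s((2 : Fin 6), 5)} = 0 := by
  unfold TG
  apply Finset.sum_eq_zero
  intro e he
  rw [Set.Finite.mem_toFinset] at he
  obtain ⟨heG, hne⟩ := he
  have hne' : e ≠ s((2 : Fin 6), 5) := fun h => hne (Set.mem_singleton_iff.mpr h)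
  apply Nat.sub_eq_zero_of_le
  have hsub : ({s((2 : Fin 6), 5)} : Set (Sym2 (Fin 6))) ⊆ {s(1, 5), s(2, 5)} :=
    fun x hx => Set.mem_insert_iff.mpr (Or.inr (Set.mem_singleton_iff.mp hx))
  induction e using Sym2.ind with
  | _ u v =>
    rw [SimpleGraph.mem_edgeSet] at heG
    rcases (by decide : ∀ u v : Fin 6, G6.Adj u v →
        (K6.Adj u v ∨ s(u, v) = s((0 : Fin 6), 5) ∨ s(u, v) = s((1 : Fin 6), 5) ∨
          s(u, v) = s((2 : Fin 6), 5))) u v heG with h | h | h | h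
    · exact le_trans (atruss_le4K _ hsub _ (K6.mem_edgeSet.mpr h))
        (etruss_ge4 _ (K6.mem_edgeSet.mpr h))
    · rw [h]
      exact le_trans (atruss_le3b _ (Or.inl rfl))
        (etruss_ge3 _ (h ▸ G6.mem_edgeSet.mpr heG))
    · rw [h]
      exact le_trans (atruss_le3b _ (Or.inr rfl))
        (etruss_ge3 _ (h ▸ G6.mem_edgeSet.mpr heG))
    · exact absurd h hne'

lemma TG_ab_ge1 : 1 ≤ TG G6 ({s((1 : Fin 6), 5)} ∪ {s((2 : Fin 6), 5)}) := by
  unfold TG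
  have hm : s((0 : Fin 6), 5) ∈
      (G6.edgeSet \ ({s((1 : Fin 6), 5)} ∪ {s((2 : Fin 6), 5)})).toFinite.toFinset := by
    rw [Set.Finite.mem_toFinset]
    exact ⟨G6.mem_edgeSet.mpr (by decide), hnotmem5⟩
  have h1 : 1 ≤ atruss G6 ({s((1 : Fin 6), 5)} ∪ {s((2 : Fin 6), 5)}) s((0 : Fin 6), 5) -
      etruss G6 s((0 : Fin 6), 5) := by
    have h4 := atruss_ab_ge4
    have h3 := etruss_05_le3
    omega
  exact le_trans h1 (Finset.single_le_sum
    (f := fun e => atruss G6 ({s((1 : Fin 6), 5)} ∪ {s((2 : Fin 6), 5)}) e - etruss G6 e)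
    (fun i _ => Nat.zero_le _) hm)

lemma inter_empty :
    ({s((1 : Fin 6), 5)} : Set (Sym2 (Fin 6))) ∩ {s((2 : Fin 6), 5)} = ∅ := by
  ext x
  simp only [Set.mem_inter_iff, Set.mem_singleton_iff, Set.mem_empty_iff_false, iff_false,
    not_and]
  rintro rfl
  decide

lemma TG_empty : TG G6 (∅ : Set (Sym2 (Fin 6))) = 0 := by
  unfold TG
  apply Finset.sum_eq_zero
  intro e _
  have h : atruss G6 ∅ e = etruss G6 e := by
    unfold atruss etruss
    congr 1
    ext k
    simp only [Set.mem_setOf_eq]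
    constructor
    · rintro ⟨H, ⟨hle, hp⟩, heH⟩
      exact ⟨H, ⟨hle, fun f hf => (hp f hf).resolve_left (Set.notMem_empty f)⟩, heH⟩
    · rintro ⟨H, ⟨hle, hp⟩, heH⟩
      exact ⟨H, ⟨hle, fun f hf => Or.inr (hp f hf)⟩, heH⟩
  rw [h, Nat.sub_self]


theorem stmt5 : ∃ (n : ℕ) (G : SimpleGraph (Fin n)) (a b : Sym2 (Fin n)),
    a ∈ G.edgeSet ∧ b ∈ G.edgeSet ∧ a ≠ b ∧
    TG G {a} + TG G {b} < TG G ({a} ∪ {b}) + TG G ({a} ∩ {b} : Set (Sym2 (Fin n))) := by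
  refine ⟨6, G6, s(1, 5), s(2, 5), G6.mem_edgeSet.mpr (by decide),
    G6.mem_edgeSet.mpr (by decide), by decide, ?_⟩
  rw [TG_a, TG_b, inter_empty, TG_empty]
  have := TG_ab_ge1
  omega
end

section
/- If a candidate follower e of an anchor x has fewer than t(e)-1 effective triangles (triangles whose other two edges are each either not yet eliminated and ordered after e, or already verified as survivors), then e cannot be a true follower of x, i.e., t^{x}(e) = t(e). -/
variable {V : Type*}

lemma esupp_mono_s15 [Fintype V] {H H' : SimpleGraph V} (h : H ≤ H') (e : Sym2 V) :
    esupp H e ≤ esupp H' e := by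
  induction e using Sym2.inductionOn with
  | hf u v =>
    show Nat.card {w : V // H.Adj u w ∧ H.Adj v w} ≤
      Nat.card {w : V // H'.Adj u w ∧ H'.Adj v w}
    exact Nat.card_le_card_of_injective
      (fun w => ⟨w.1, h w.2.1, h w.2.2⟩)
      (fun a b hab => by simpa [Subtype.ext_iff] using hab)

lemma atrussGraph_is [Fintype V] (G : SimpleGraph V) (A : Set (Sym2 V)) (k : ℕ) :
    IsATrussSub G (atrussGraph G A k) A k := by
  constructor
  · exact sSup_le fun H hH => hH.1
  · intro f hf
    induction f using Sym2.inductionOn with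
    | hf u v =>
      rw [SimpleGraph.mem_edgeSet, atrussGraph, SimpleGraph.sSup_adj] at hf
      obtain ⟨H, hH, hadj⟩ := hf
      rcases hH.2 s(u, v) hadj with h | h
      · exact Or.inl h
      · exact Or.inr (h.trans (esupp_mono_s15 (le_sSup hH) _))

theorem stmt15 [Fintype V] (G : SimpleGraph V) (x e : Sym2 V)
    (hx : x ∈ G.edgeSet) (he : e ∈ G.edgeSet) (hne : e ≠ x) (s : ℕ)
    (hub : esupp (atrussGraph G {x} (etruss G e + 1)) e ≤ s)
    (hs : s < etruss G e - 1) :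
    atruss G {x} e = etruss G e := by
  set k := etruss G e with hk
  set S : Set ℕ := {m | ∃ H, IsTrussSub G H m ∧ e ∈ H.edgeSet} with hS
  set T : Set ℕ := {m | ∃ H, IsATrussSub G H {x} m ∧ e ∈ H.edgeSet} with hT
  have hST : S ⊆ T := by
    rintro m ⟨H, ⟨hle, hsupp⟩, heH⟩
    exact ⟨H, ⟨hle, fun f hf => Or.inr (hsupp f hf)⟩, heH⟩
  have hSne : S.Nonempty :=
    ⟨0, G, ⟨le_refl _, fun f _ => by simp⟩, he⟩
  have hTbdd : BddAbove T := by
    refine ⟨Fintype.card V + 2, ?_⟩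
    rintro m ⟨H, ⟨_, hsupp⟩, heH⟩
    rcases hsupp e heH with h | h
    · exact absurd h hne
    · have := h.trans (esupp_le_card H e)
      omega
  -- upper bound : every element of T is ≤ k
  have hub' : ∀ m ∈ T, m ≤ k := by
    rintro m ⟨H, hH, heH⟩
    by_contra hgt
    push_neg at hgt
    have hH' : IsATrussSub G H {x} (k + 1) := by
      refine ⟨hH.1, fun f hf => ?_⟩
      rcases hH.2 f hf with h | h
      · exact Or.inl h
      · exact Or.inr (le_trans (by omega) h)
    have hleT : H ≤ atrussGraph G {x} (k + 1) := le_sSup hH'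
    have heT : e ∈ (atrussGraph G {x} (k + 1)).edgeSet :=
      SimpleGraph.edgeSet_mono hleT heH
    rcases (atrussGraph_is G {x} (k + 1)).2 e heT with h | h
    · exact hne h
    · have := h.trans hub
      omega
  have h1 : atruss G {x} e ≤ k := csSup_le (hSne.mono hST) hub'
  have h2 : k ≤ atruss G {x} e := csSup_le_csSup hTbdd hSne hST
  omega
end
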